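/- Let X be a real random variable with log moment generating function Λ finite on all of ℝ, and let a = essinf X and b = esssup X (possibly infinite). If a < c < b, then there exists λ ∈ ℝ with Λ'(λ) = c; that is, the interior of the range of Λ' equals the open interval (a,b). -/

import Mathlib

open MeasureTheory Real Filter

section Aux

variable {Ω : Type*} [MeasurableSpace Ω] {μ : Measure Ω} [IsProbabilityMeasure μ]

/-- Integrability of `X * exp (l * X)`. -/
lemma aux_integrable_mul_exp {X : Ω → ℝ} (hX : Measurable X)
    (hint : ∀ l : ℝ, Integrable (fun ω => Real.exp (l * X ω)) μ) (l : ℝ) :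
    Integrable (fun ω => X ω * Real.exp (l * X ω)) μ := by
  refine Integrable.mono ((hint (l + 1)).add (hint (l - 1)))
    ((hX.mul ((Real.measurable_exp.comp (hX.const_mul l)))).aestronglyMeasurable) ?_
  filter_upwards with ω
  have h1 : |X ω| ≤ Real.exp (X ω) + Real.exp (-X ω) := by
    rcases abs_cases (X ω) with ⟨h, _⟩ | ⟨h, _⟩
    · nlinarith [Real.add_one_le_exp (X ω), Real.exp_pos (-X ω)]
    · nlinarith [Real.add_one_le_exp (-X ω), Real.exp_pos (X ω)]
  have h2 : (Real.exp (X ω) + Real.exp (-X ω)) * Real.exp (l * X ω)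
      = Real.exp ((l + 1) * X ω) + Real.exp ((l - 1) * X ω) := by
    rw [add_mul, ← Real.exp_add, ← Real.exp_add]; ring_nf
  have h3 : (0:ℝ) < Real.exp (l * X ω) := Real.exp_pos _
  rw [norm_mul, Real.norm_eq_abs, Real.norm_eq_abs, Real.abs_exp, Real.norm_eq_abs]
  calc |X ω| * Real.exp (l * X ω)
      ≤ (Real.exp (X ω) + Real.exp (-X ω)) * Real.exp (l * X ω) := by
        exact mul_le_mul_of_nonneg_right h1 h3.le
    _ = Real.exp ((l + 1) * X ω) + Real.exp ((l - 1) * X ω) := h2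
    _ ≤ |Real.exp ((l + 1) * X ω) + Real.exp ((l - 1) * X ω)| := le_abs_self _

/-- Derivative of the mgf. -/
lemma aux_hasDerivAt_mgf {X : Ω → ℝ} (hX : Measurable X)
    (hint : ∀ l : ℝ, Integrable (fun ω => Real.exp (l * X ω)) μ) (l : ℝ) :
    HasDerivAt (fun x => ∫ ω, Real.exp (x * X ω) ∂μ)
      (∫ ω, X ω * Real.exp (l * X ω) ∂μ) l := by
  have key := hasDerivAt_integral_of_dominated_loc_of_deriv_le (μ := μ)
    (F := fun x ω => Real.exp (x * X ω)) (F' := fun x ω => X ω * Real.exp (x * X ω))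
    (x₀ := l)
    (bound := fun ω => (Real.exp (X ω) + Real.exp (-X ω)) *
      (Real.exp ((l + 1) * X ω) + Real.exp ((l - 1) * X ω)))
    (Metric.ball_mem_nhds l one_pos) ?_ (hint l) ?_ ?_ ?_ ?_
  · exact key.2
  · filter_upwards with x
    exact ((Real.measurable_exp.comp (hX.const_mul x))).aestronglyMeasurable
  · exact (hX.mul (Real.measurable_exp.comp (hX.const_mul l))).aestronglyMeasurable
  · filter_upwards with ω x hx
    have hx' : |x - l| < 1 := by simpa [Real.dist_eq] using hx
    have h1 : |X ω| ≤ Real.exp (X ω) + Real.exp (-X ω) := by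
      rcases abs_cases (X ω) with ⟨h, _⟩ | ⟨h, _⟩
      · nlinarith [Real.add_one_le_exp (X ω), Real.exp_pos (-X ω)]
      · nlinarith [Real.add_one_le_exp (-X ω), Real.exp_pos (X ω)]
    have h2 : Real.exp (x * X ω) ≤ Real.exp ((l + 1) * X ω) + Real.exp ((l - 1) * X ω) := by
      rcases le_or_gt 0 (X ω) with h | h
      · have : x * X ω ≤ (l + 1) * X ω := by nlinarith [abs_lt.mp hx']
        have := Real.exp_le_exp.mpr this
        nlinarith [Real.exp_pos ((l - 1) * X ω)]
      · have : x * X ω ≤ (l - 1) * X ω := by nlinarith [abs_lt.mp hx']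
        have := Real.exp_le_exp.mpr this
        nlinarith [Real.exp_pos ((l + 1) * X ω)]
    rw [norm_mul, Real.norm_eq_abs, Real.norm_eq_abs, Real.abs_exp]
    have h0 : (0:ℝ) ≤ |X ω| := abs_nonneg _
    have h3 : (0:ℝ) < Real.exp (x * X ω) := Real.exp_pos _
    calc |X ω| * Real.exp (x * X ω)
        ≤ (Real.exp (X ω) + Real.exp (-X ω)) * Real.exp (x * X ω) :=
          mul_le_mul_of_nonneg_right h1 h3.le
      _ ≤ (Real.exp (X ω) + Real.exp (-X ω)) *
          (Real.exp ((l + 1) * X ω) + Real.exp ((l - 1) * X ω)) := by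
          have : (0:ℝ) ≤ Real.exp (X ω) + Real.exp (-X ω) := by positivity
          exact mul_le_mul_of_nonneg_left h2 this
  · have heq : (fun ω => (Real.exp (X ω) + Real.exp (-X ω)) *
        (Real.exp ((l + 1) * X ω) + Real.exp ((l - 1) * X ω))) =
        fun ω => Real.exp ((l + 2) * X ω) + Real.exp (l * X ω) +
          (Real.exp (l * X ω) + Real.exp ((l - 2) * X ω)) := by
      funext ω
      rw [add_mul, mul_add, mul_add, ← Real.exp_add, ← Real.exp_add, ← Real.exp_add,
        ← Real.exp_add]
      ring_nf
    rw [heq]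
    exact ((hint (l + 2)).add (hint l)).add ((hint l).add (hint (l - 2)))
  · filter_upwards with ω x _
    have : HasDerivAt (fun x : ℝ => x * X ω) (X ω) x := by
      simpa using (hasDerivAt_id x).mul_const (X ω)
    simpa [mul_comm] using this.exp

end Aux

/-- If the log moment generating function `Λ` of a real random variable `X` is finite on
all of `ℝ`, and `a = essinf X < c < esssup X = b`, then there exists `λ` with `Λ'(λ) = c`;
that is, the interior of the range of `Λ'` equals the open interval `(a, b)`. -/
theorem exists_deriv_cgf_eq {Ω : Type*} [MeasurableSpace Ω] (μ : Measure Ω)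
    [IsProbabilityMeasure μ] (X : Ω → ℝ) (hX : Measurable X)
    (hint : ∀ l : ℝ, Integrable (fun ω => Real.exp (l * X ω)) μ)
    (Λ : ℝ → ℝ) (hΛ : ∀ l : ℝ, Λ l = Real.log (∫ ω, Real.exp (l * X ω) ∂μ))
    (c : ℝ)
    (hc1 : essInf (fun ω => (X ω : EReal)) μ < (c : EReal))
    (hc2 : (c : EReal) < essSup (fun ω => (X ω : EReal)) μ) :
    ∃ l : ℝ, deriv Λ l = c := by
  set M : ℝ → ℝ := fun l => ∫ ω, Real.exp (l * X ω) ∂μ with hMdef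
  have hMpos : ∀ l, 0 < M l := fun l =>
    ProbabilityTheory.mgf_pos (X := X) (μ := μ) (t := l) (hint l)
  have hΛeq : Λ = fun l => Real.log (M l) := funext hΛ
  have hL : ∀ l, HasDerivAt Λ ((∫ ω, X ω * Real.exp (l * X ω) ∂μ) / M l) l := by
    intro l
    rw [hΛeq]
    exact (aux_hasDerivAt_mgf hX hint l).log (hMpos l).ne'
  -- the function to minimize
  set f : ℝ → ℝ := fun l => Λ l - c * l with hfdef
  have hf : ∀ l, HasDerivAt f ((∫ ω, X ω * Real.exp (l * X ω) ∂μ) / M l - c) l := by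
    intro l
    have h2 : HasDerivAt (fun l : ℝ => c * l) c l := by
      simpa using (hasDerivAt_id l).const_mul c
    exact (hL l).sub h2
  have hfc : Continuous f :=
    continuous_iff_continuousAt.mpr fun l => (hf l).continuousAt
  -- coercivity at +∞
  have htop : Tendsto f atTop atTop := by
    obtain ⟨y, hy1, hy2⟩ := exists_between hc2
    have hyt : y ≠ ⊤ := (hy2.trans_le le_top).ne
    have hyb : y ≠ ⊥ := ((EReal.bot_lt_coe c).trans hy1).ne'
    lift y to ℝ using ⟨hyt, hyb⟩
    have hcy : c < y := EReal.coe_lt_coe_iff.mp hy1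
    set A : Set Ω := {ω | y < X ω} with hAdef
    have hAmeas : MeasurableSet A := measurableSet_lt measurable_const hX
    have hApos : 0 < (μ A).toReal := by
      refine ENNReal.toReal_pos ?_ (measure_ne_top μ A)
      intro h0
      have hae : ∀ᵐ ω ∂μ, (X ω : EReal) ≤ (y : EReal) := by
        have : ∀ᵐ ω ∂μ, ¬ (y < X ω) := by
          rw [ae_iff]; simpa [A] using h0
        filter_upwards [this] with ω hω
        exact EReal.coe_le_coe_iff.mpr (not_lt.mp hω)
      exact absurd (essSup_le_of_ae_le _ hae) (not_le.mpr hy2)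
    have hMlb : ∀ l : ℝ, 0 ≤ l → Real.exp (l * y) * (μ A).toReal ≤ M l := by
      intro l hl
      have h1 : ∫ ω in A, Real.exp (l * X ω) ∂μ ≤ M l :=
        setIntegral_le_integral (hint l) (Filter.Eventually.of_forall fun ω => (Real.exp_pos _).le)
      have h2 : Real.exp (l * y) * (μ A).toReal ≤ ∫ ω in A, Real.exp (l * X ω) ∂μ := by
        rw [mul_comm, ← smul_eq_mul]
        refine setIntegral_ge_of_const_le hAmeas (measure_ne_top μ A) (fun ω hω => ?_)
          (hint l).integrableOn
        exact Real.exp_le_exp.mpr (mul_le_mul_of_nonneg_left (le_of_lt hω) hl)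
      linarith
    have hlin : Tendsto (fun l : ℝ => Real.log ((μ A).toReal) + l * (y - c)) atTop atTop :=
      tendsto_atTop_add_const_left _ _ (tendsto_id.atTop_mul_const' (by linarith))
    refine tendsto_atTop_mono' _ ?_ hlin
    filter_upwards [eventually_ge_atTop (0:ℝ)] with l hl
    have h1 : Real.log (Real.exp (l * y) * (μ A).toReal) ≤ Real.log (M l) :=
      Real.log_le_log (by positivity) (hMlb l hl)
    rw [Real.log_mul (Real.exp_ne_zero _) hApos.ne', Real.log_exp] at h1
    have : Λ l = Real.log (M l) := hΛ l
    simp only [f, this]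
    linarith
  -- coercivity at -∞
  have hbot : Tendsto f atBot atTop := by
    obtain ⟨y, hy1, hy2⟩ := exists_between hc1
    have hyt : y ≠ ⊤ := (hy2.trans_le le_top).ne
    have hyb : y ≠ ⊥ := (bot_le.trans_lt hy1).ne'
    lift y to ℝ using ⟨hyt, hyb⟩
    have hcy : y < c := EReal.coe_lt_coe_iff.mp hy2
    set A : Set Ω := {ω | X ω < y} with hAdef
    have hAmeas : MeasurableSet A := measurableSet_lt hX measurable_const
    have hApos : 0 < (μ A).toReal := by
      refine ENNReal.toReal_pos ?_ (measure_ne_top μ A)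
      intro h0
      have hae : ∀ᵐ ω ∂μ, (y : EReal) ≤ (X ω : EReal) := by
        have : ∀ᵐ ω ∂μ, ¬ (X ω < y) := by
          rw [ae_iff]; simpa [A] using h0
        filter_upwards [this] with ω hω
        exact EReal.coe_le_coe_iff.mpr (not_lt.mp hω)
      exact absurd (le_essInf_of_ae_le _ hae) (not_le.mpr hy1)
    have hMlb : ∀ l : ℝ, l ≤ 0 → Real.exp (l * y) * (μ A).toReal ≤ M l := by
      intro l hl
      have h1 : ∫ ω in A, Real.exp (l * X ω) ∂μ ≤ M l :=
        setIntegral_le_integral (hint l) (Filter.Eventually.of_forall fun ω => (Real.exp_pos _).le)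
      have h2 : Real.exp (l * y) * (μ A).toReal ≤ ∫ ω in A, Real.exp (l * X ω) ∂μ := by
        rw [mul_comm, ← smul_eq_mul]
        refine setIntegral_ge_of_const_le hAmeas (measure_ne_top μ A) (fun ω hω => ?_)
          (hint l).integrableOn
        exact Real.exp_le_exp.mpr (mul_le_mul_of_nonpos_left (le_of_lt hω) hl)
      linarith
    have hlin : Tendsto (fun l : ℝ => Real.log ((μ A).toReal) + l * (y - c)) atBot atTop :=
      tendsto_atTop_add_const_left _ _ (tendsto_id.atBot_mul_const_of_neg' (by linarith))
    refine tendsto_atTop_mono' _ ?_ hlin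
    filter_upwards [eventually_le_atBot (0:ℝ)] with l hl
    have h1 : Real.log (Real.exp (l * y) * (μ A).toReal) ≤ Real.log (M l) :=
      Real.log_le_log (by positivity) (hMlb l hl)
    rw [Real.log_mul (Real.exp_ne_zero _) hApos.ne', Real.log_exp] at h1
    have : Λ l = Real.log (M l) := hΛ l
    simp only [f, this]
    linarith
  have hcoer : Tendsto f (cocompact ℝ) atTop := by
    rw [cocompact_eq_atBot_atTop, tendsto_sup]
    exact ⟨hbot, htop⟩
  obtain ⟨x, hx⟩ := hfc.exists_forall_le hcoer
  have hmin : IsLocalMin f x := Filter.Eventually.of_forall hx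
  have hd0 : deriv f x = 0 := hmin.deriv_eq_zero
  have hd : deriv f x = (∫ ω, X ω * Real.exp (x * X ω) ∂μ) / M x - c := (hf x).deriv
  refine ⟨x, ?_⟩
  rw [(hL x).deriv]
  linarith [hd0, hd.symm.trans hd0]
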